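/- Let p be a prime number and let A be a commutative ℤ_p-algebra that is p-adically complete (the canonical map A → lim_n A/pⁿA is bijective) and such that A/pA is a finite-dimensional 𝔽_p-vector space of dimension D. Then the set of ℤ_p-algebra homomorphisms A → ℤ_p is finite, of cardinality at most D. -/

import Mathlib

set_option synthInstance.maxHeartbeats 1000000
set_option maxHeartbeats 1000000
open Module

lemma key (p : ℕ) [Fact p.Prime] (A : Type*) [CommRing A] [Algebra ℤ_[p] A]
    (D : ℕ) (hdim : Nat.card (A ⧸ Ideal.span {(p : A)}) = p ^ D)
    (n : ℕ) (f : Fin n → (A →ₐ[ℤ_[p]] ℤ_[p])) (hf : Function.Injective f) : n ≤ D := by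
  classical
  -- the homs viewed as monoid homs into ℚ_p
  set G : Fin n → (A →* ℚ_[p]) :=
    fun i => (PadicInt.Coe.ringHom.toMonoidHom.comp (f i : A →+* ℤ_[p]).toMonoidHom) with hG
  have hGinj : Function.Injective G := by
    intro i j hij
    apply hf
    ext a
    have := DFunLike.congr_fun hij a
    have h' : ((f i a : ℤ_[p]) : ℚ_[p]) = ((f j a : ℤ_[p]) : ℚ_[p]) := by
      have h2 := this
      simp [hG] at h2
      exact h2
    exact Subtype.coe_injective h'
  have hGindep : LinearIndependent ℚ_[p] (fun i => (G i : A → ℚ_[p])) :=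
    (linearIndependent_monoidHom A ℚ_[p]).comp G hGinj
  -- the joint map into ℤ_p^n
  set F : A →ₗ[ℤ_[p]] (Fin n → ℤ_[p]) := LinearMap.pi (fun i => (f i).toLinearMap) with hFdef
  set M := LinearMap.range F with hM
  haveI : Module.Finite ℤ_[p] M := Module.Finite.iff_fg.mpr (IsNoetherian.noetherian M)
  haveI : Module.Free ℤ_[p] M := inferInstance
  -- coordinate functionals on M are linearly independent
  set lam : Fin n → Dual ℤ_[p] M := fun i => (LinearMap.proj i).comp M.subtype with hlamdef
  have hlam : LinearIndependent ℤ_[p] lam := by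
    rw [Fintype.linearIndependent_iff]
    intro g hg i
    have hcast : ∀ k, ((g k : ℤ_[p]) : ℚ_[p]) = 0 := by
      apply Fintype.linearIndependent_iff.mp hGindep
      funext a
      have h1 : (∑ k, g k • lam k) ⟨F a, LinearMap.mem_range_self F a⟩ = 0 := by rw [hg]; rfl
      have h2 : (∑ k, g k * (f k a)) = 0 := by
        simpa [hlamdef, hFdef] using h1
      have h3 := congrArg (PadicInt.Coe.ringHom (p := p)) h2
      rw [map_sum, map_zero] at h3
      simp only [map_mul] at h3
      simp only [hG, RingHom.toMonoidHom_eq_coe, MonoidHom.coe_comp, MonoidHom.coe_coe,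
        RingHom.coe_coe, Function.comp_apply, Pi.smul_apply, smul_eq_mul,
        Finset.sum_apply, Pi.zero_apply]
      exact h3
    exact Subtype.coe_injective (hcast i)
  -- hence n ≤ finrank of the dual of M, which equals finrank M
  set B := Module.Free.chooseBasis ℤ_[p] M with hB
  have hdual : finrank ℤ_[p] (Dual ℤ_[p] M) = finrank ℤ_[p] M := by
    rw [finrank_eq_card_basis B.dualBasis, finrank_eq_card_basis B]
  have hn_le : n ≤ finrank ℤ_[p] M := by
    have := hlam.fintype_card_le_finrank
    simpa [hdual] using this
  -- a surjection A → (ι → ZMod p) killing pA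
  set ι := Module.Free.ChooseBasisIndex ℤ_[p] M with hι
  set Fc : A →ₗ[ℤ_[p]] M := F.rangeRestrict with hFc
  set g : A → (ι → ZMod p) := fun a j => PadicInt.toZMod (B.repr (Fc a) j) with hg
  have hg_sub : ∀ a b : A, g (a - b) = g a - g b := by
    intro a b
    funext j
    simp [hg, map_sub]
  have hg_p : ∀ a ∈ Ideal.span {(p : A)}, g a = 0 := by
    intro a ha
    obtain ⟨c, hc⟩ := Ideal.mem_span_singleton.mp ha
    funext j
    have hpc : a = p • c := by rw [hc, nsmul_eq_mul]
    rw [hg]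
    simp only [hpc, map_nsmul, Finsupp.smul_apply]
    simp [nsmul_eq_mul, ZMod.natCast_self]
  have hg_surj : Function.Surjective g := by
    intro w
    set u : ι → ℤ_[p] := fun j => ((w j).val : ℤ_[p]) with hu
    set m : M := B.equivFun.symm u with hm
    obtain ⟨a, ha⟩ := m.2
    refine ⟨a, ?_⟩
    have hFca : Fc a = m := Subtype.ext ha
    funext j
    have hrepr : B.repr m j = u j := by
      have := congrFun (B.equivFun.apply_symm_apply u) j
      rwa [Basis.equivFun_apply] at this
    rw [hg]
    simp only [hFca, hrepr, hu]
    rw [map_natCast]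
    simp [ZMod.natCast_val, ZMod.cast_id]
  -- finiteness of A/pA
  haveI : Finite (A ⧸ Ideal.span {(p : A)}) := by
    apply Nat.finite_of_card_ne_zero
    rw [hdim]
    exact pow_ne_zero _ (Fact.out : p.Prime).pos.ne'
  -- injection (ι → ZMod p) ↪ A/pA
  have hinj : Function.Injective
      (fun w : ι → ZMod p => Ideal.Quotient.mk (Ideal.span {(p : A)}) (hg_surj w).choose) := by
    intro w w' h
    have h1 : (hg_surj w).choose - (hg_surj w').choose ∈ Ideal.span {(p : A)} :=
      Ideal.Quotient.eq.mp h
    have h2 := hg_p _ h1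
    rw [hg_sub, (hg_surj w).choose_spec, (hg_surj w').choose_spec, sub_eq_zero] at h2
    exact h2
  have hcard : Nat.card (ι → ZMod p) ≤ p ^ D := by
    rw [← hdim]
    exact Nat.card_le_card_of_injective _ hinj
  have hcard2 : Nat.card (ι → ZMod p) = p ^ finrank ℤ_[p] M := by
    rw [Nat.card_pi]
    simp only [Nat.card_zmod, Finset.prod_const, Finset.card_univ]
    rw [finrank_eq_card_basis B]
  rw [hcard2] at hcard
  have hrD : finrank ℤ_[p] M ≤ D :=
    (Nat.pow_le_pow_iff_right (Fact.out : p.Prime).one_lt).mp hcard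
  exact hn_le.trans hrD

/-- Let `A` be a `p`-adically complete commutative `ℤ_p`-algebra such that
`A/pA` is a finite-dimensional `𝔽_p`-vector space of dimension `D`
(equivalently, of cardinality `p ^ D`).  Then the set of `ℤ_p`-algebra
homomorphisms `A → ℤ_p` is finite, of cardinality at most `D`. -/
theorem card_algHom_le_dim_mod_p (p : ℕ) [Fact p.Prime]
    (A : Type*) [CommRing A] [Algebra ℤ_[p] A]
    [IsAdicComplete (Ideal.span {(p : A)}) A]
    (D : ℕ) (hdim : Nat.card (A ⧸ Ideal.span {(p : A)}) = p ^ D) :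
    Finite (A →ₐ[ℤ_[p]] ℤ_[p]) ∧ Nat.card (A →ₐ[ℤ_[p]] ℤ_[p]) ≤ D := by
  have hfin : Finite (A →ₐ[ℤ_[p]] ℤ_[p]) := by
    by_contra h
    rw [not_finite_iff_infinite] at h
    have e := Infinite.natEmbedding (A →ₐ[ℤ_[p]] ℤ_[p])
    have hinj : Function.Injective (fun i : Fin (D + 1) => e (i : ℕ)) :=
      fun i j hij => Fin.val_injective (e.injective hij)
    exact absurd (key p A D hdim (D + 1) _ hinj) (by omega)
  refine ⟨hfin, ?_⟩
  rcases isEmpty_or_nonempty (A →ₐ[ℤ_[p]] ℤ_[p]) with h | h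
  · simp [Nat.card_of_isEmpty]
  · have hpos : Nat.card (A →ₐ[ℤ_[p]] ℤ_[p]) ≠ 0 :=
      Nat.card_ne_zero.mpr ⟨h, hfin⟩
    have e := Nat.equivFinOfCardPos hpos
    exact key p A D hdim _ e.symm e.symm.injective
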